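/- Let p₀, q₀ ∈ ℂ[ε] be coprime polynomials of degrees n and m. Given any sequences of polynomials (p_k)_{k≥1}, (q_k)_{k≥1} with deg p_k ≤ n, deg q_k ≤ m, and (r_k)_{k≥0} with deg r_k ≤ n+m−1, there exist unique sequences of polynomials (u_k), (v_k) with deg u_k ≤ m−1, deg v_k ≤ n−1 satisfying for every k ≥ 0: Σ_{i+l=k} u_i(ε+l)·p_l(ε) + Σ_{i+l=k} v_i(ε+l)·q_l(ε) = r_k(ε). -/

import Mathlib

open Polynomial Finset

private lemma degCompXaddC (c : ℂ) (f : Polynomial ℂ) :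
    (f.comp (X + C c)).degree = f.degree := by
  rw [← taylor_apply]
  rcases eq_or_ne f 0 with rfl | hf
  · simp
  · have h2 : taylor c f ≠ 0 := fun h => hf (taylor_injective c (by simp [h]))
    rw [degree_eq_natDegree hf, degree_eq_natDegree h2, natDegree_taylor]

private lemma sylvester (n m : ℕ) (p0 q0 : Polynomial ℂ) (hcop : IsCoprime p0 q0)
    (hp0 : p0.degree = (n:ℕ)) (hq0 : q0.degree = (m:ℕ)) :
    ∀ s : Polynomial ℂ, s.degree < ((n+m : ℕ) : WithBot ℕ) →
    ∃! uv : Polynomial ℂ × Polynomial ℂ,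
      uv.1.degree < (m:ℕ) ∧ uv.2.degree < (n:ℕ) ∧ uv.1 * p0 + uv.2 * q0 = s := by
  intro s hs
  have hq0ne : q0 ≠ 0 := fun h => by simp [h] at hq0
  have hp0ne : p0 ≠ 0 := fun h => by simp [h] at hp0
  have hmb : ((m:ℕ) : WithBot ℕ) ≠ ⊥ := by exact_mod_cast WithBot.coe_ne_bot
  obtain ⟨a, b, hab⟩ := id hcop
  set u : Polynomial ℂ := (a * s) % q0 with hu
  set v : Polynomial ℂ := b * s + ((a * s) / q0) * p0 with hv
  have hmod : q0 * ((a*s) / q0) + (a*s) % q0 = a*s := EuclideanDomain.div_add_mod _ _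
  have heq : u * p0 + v * q0 = s := by
    have : (q0 * ((a*s)/q0) + (a*s)%q0) * p0 + b*s*q0 = (a*p0 + b*q0)*s := by
      linear_combination hmod * p0
    calc u * p0 + v * q0 = (q0 * ((a*s)/q0) + (a*s)%q0) * p0 + b*s*q0 := by rw [hu, hv]; ring
    _ = (a*p0 + b*q0)*s := this
    _ = s := by rw [hab, one_mul]
  have hud : u.degree < (m:ℕ) := by
    have h2 : ((a*s) % q0).degree < q0.degree := EuclideanDomain.mod_lt _ hq0ne
    rw [hq0] at h2
    exact h2
  have hupd : (u * p0).degree < ((n+m:ℕ) : WithBot ℕ) := by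
    apply lt_of_le_of_lt (degree_mul_le _ _)
    rw [hp0]
    calc u.degree + (n:ℕ) < (m:ℕ) + (n:ℕ) := by
          exact (WithBot.add_lt_add_iff_right (by exact_mod_cast WithBot.coe_ne_bot)).mpr hud
      _ = ((n+m:ℕ) : WithBot ℕ) := by push_cast; ring
  have hvd : v.degree < (n:ℕ) := by
    rcases eq_or_ne v 0 with h | h
    · rw [h, degree_zero]; exact bot_lt_iff_ne_bot.mpr (by exact_mod_cast WithBot.coe_ne_bot)
    · have hvq : (v * q0).degree < ((n+m:ℕ) : WithBot ℕ) := by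
        have : v * q0 = s - u * p0 := by rw [← heq]; ring
        rw [this]
        exact lt_of_le_of_lt (degree_sub_le _ _) (max_lt hs hupd)
      rw [degree_mul, hq0, Nat.cast_add] at hvq
      exact (WithBot.add_lt_add_iff_right hmb).mp hvq
  refine ⟨(u, v), ⟨hud, hvd, heq⟩, ?_⟩
  rintro ⟨u', v'⟩ ⟨hu'd, hv'd, heq'⟩
  have key : (u' - u) * p0 = (v - v') * q0 := by
    have := heq'.trans heq.symm
    linear_combination this
  have hdvd : q0 ∣ (u' - u) := by
    refine hcop.symm.dvd_of_dvd_mul_right ?_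
    exact ⟨v - v', by rw [key]; ring⟩
  have hu'u : u' - u = 0 := by
    apply eq_zero_of_dvd_of_degree_lt hdvd
    rw [hq0]
    exact lt_of_le_of_lt (degree_sub_le _ _) (max_lt hu'd hud)
  have hueq : u' = u := by linear_combination hu'u
  have hveq : v' = v := by
    have : (v - v') * q0 = 0 := by rw [← key, hu'u, zero_mul]
    rcases mul_eq_zero.mp this with h | h
    · linear_combination -h
    · exact absurd h hq0ne
  simp [hueq, hveq]

/-- the "tail" of the triangular system: contributions of earlier coefficients. -/
noncomputable def fbTail (p q u v : ℕ → Polynomial ℂ) (k : ℕ) : Polynomial ℂ :=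
  ∑ i ∈ range k, ((u (k - (i+1))).comp (X + C ((i+1 : ℕ) : ℂ)) * p (i+1)
    + (v (k - (i+1))).comp (X + C ((i+1 : ℕ) : ℂ)) * q (i+1))

noncomputable def fbSol (S : Polynomial ℂ → Polynomial ℂ × Polynomial ℂ)
    (p q r : ℕ → Polynomial ℂ) : ℕ → Polynomial ℂ × Polynomial ℂ
  | k => S (r k - ∑ i ∈ (range k).attach,
      ((fbSol S p q r (k - (i.1+1))).1.comp (X + C ((i.1+1 : ℕ) : ℂ)) * p (i.1+1)
       + (fbSol S p q r (k - (i.1+1))).2.comp (X + C ((i.1+1 : ℕ) : ℂ)) * q (i.1+1)))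
  decreasing_by have := Finset.mem_range.mp i.2; omega

private lemma fbSol_eq (S : Polynomial ℂ → Polynomial ℂ × Polynomial ℂ)
    (p q r : ℕ → Polynomial ℂ) (k : ℕ) : fbSol S p q r k
      = S (r k - fbTail p q (fun j => (fbSol S p q r j).1) (fun j => (fbSol S p q r j).2) k) := by
  rw [fbSol, fbTail]
  congr 1
  rw [Finset.sum_attach (range k) (fun i =>
    ((fbSol S p q r (k - (i+1))).1.comp (X + C ((i+1 : ℕ) : ℂ)) * p (i+1)
       + (fbSol S p q r (k - (i+1))).2.comp (X + C ((i+1 : ℕ) : ℂ)) * q (i+1)))]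

private lemma fbTail_degree_lt (n m : ℕ) (p q u v : ℕ → Polynomial ℂ)
    (hp : ∀ k, (p k).degree ≤ (n:ℕ)) (hq : ∀ k, (q k).degree ≤ (m:ℕ)) (k : ℕ)
    (hu : ∀ j, j < k → (u j).degree < (m:ℕ)) (hv : ∀ j, j < k → (v j).degree < (n:ℕ)) :
    (fbTail p q u v k).degree < ((n+m:ℕ) : WithBot ℕ) := by
  apply lt_of_le_of_lt (degree_sum_le _ _)
  rw [Finset.sup_lt_iff (by exact_mod_cast WithBot.bot_lt_coe (n+m))]
  intro i hi
  have hik : k - (i+1) < k := by have := mem_range.mp hi; omega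
  apply lt_of_le_of_lt (degree_add_le _ _)
  apply max_lt
  · apply lt_of_le_of_lt (degree_mul_le _ _)
    rw [degCompXaddC]
    calc (u (k - (i+1))).degree + (p (i+1)).degree
        ≤ (u (k - (i+1))).degree + (n:ℕ) := add_le_add le_rfl (hp _)
      _ < (m:ℕ) + (n:ℕ) :=
          (WithBot.add_lt_add_iff_right (by exact_mod_cast WithBot.coe_ne_bot)).mpr (hu _ hik)
      _ = ((n+m:ℕ) : WithBot ℕ) := by push_cast; ring
  · apply lt_of_le_of_lt (degree_mul_le _ _)
    rw [degCompXaddC]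
    calc (v (k - (i+1))).degree + (q (i+1)).degree
        ≤ (v (k - (i+1))).degree + (m:ℕ) := add_le_add le_rfl (hq _)
      _ < (n:ℕ) + (m:ℕ) :=
          (WithBot.add_lt_add_iff_right (by exact_mod_cast WithBot.coe_ne_bot)).mpr (hv _ hik)
      _ = ((n+m:ℕ) : WithBot ℕ) := by push_cast; ring

private lemma fbBridge (p q u v : ℕ → Polynomial ℂ) (k : ℕ) :
    (∑ l ∈ range (k + 1), (u (k - l)).comp (X + C (l : ℂ)) * p l) +
    (∑ l ∈ range (k + 1), (v (k - l)).comp (X + C (l : ℂ)) * q l)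
    = (u k * p 0 + v k * q 0) + fbTail p q u v k := by
  rw [Finset.sum_range_succ' (fun l => (u (k - l)).comp (X + C (l : ℂ)) * p l) k,
      Finset.sum_range_succ' (fun l => (v (k - l)).comp (X + C (l : ℂ)) * q l) k,
      fbTail, Finset.sum_add_distrib]
  simp only [Nat.cast_zero, map_zero, add_zero, comp_X, Nat.sub_zero]
  ring

/-- Coefficientwise solvability of `U·L + V·M = R` for formal Fuchsian operators
with coprime Euler parts: the triangular system
`Σ_{i+l=k} u_i(ε+l)·p_l(ε) + Σ_{i+l=k} v_i(ε+l)·q_l(ε) = r_k(ε)` has a unique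
solution with `deg u_k ≤ m-1`, `deg v_k ≤ n-1`. -/
theorem formal_bezout_solvable (n m : ℕ) (p q r : ℕ → Polynomial ℂ)
    (hcop : IsCoprime (p 0) (q 0))
    (hp0 : (p 0).degree = n) (hq0 : (q 0).degree = m)
    (hp : ∀ k, (p k).degree ≤ (n : ℕ)) (hq : ∀ k, (q k).degree ≤ (m : ℕ))
    (hr : ∀ k, (r k).degree < (n + m : ℕ)) :
    ∃! uv : (ℕ → Polynomial ℂ) × (ℕ → Polynomial ℂ),
      (∀ k, (uv.1 k).degree < (m : ℕ) ∧ (uv.2 k).degree < (n : ℕ)) ∧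
      (∀ k, (∑ l ∈ range (k + 1), (uv.1 (k - l)).comp (X + C (l : ℂ)) * p l) +
            (∑ l ∈ range (k + 1), (uv.2 (k - l)).comp (X + C (l : ℂ)) * q l) = r k) := by
  classical
  have hsyl := sylvester n m (p 0) (q 0) hcop hp0 hq0
  set S : Polynomial ℂ → Polynomial ℂ × Polynomial ℂ :=
    fun s => if h : s.degree < ((n+m:ℕ) : WithBot ℕ) then (hsyl s h).choose else 0 with hS
  have hSspec : ∀ s, s.degree < ((n+m:ℕ) : WithBot ℕ) →
      (S s).1.degree < (m:ℕ) ∧ (S s).2.degree < (n:ℕ) ∧ (S s).1 * p 0 + (S s).2 * q 0 = s := by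
    intro s h
    rw [hS]
    simp only [dif_pos h]
    exact (hsyl s h).choose_spec.1
  set u : ℕ → Polynomial ℂ := fun j => (fbSol S p q r j).1 with hu
  set v : ℕ → Polynomial ℂ := fun j => (fbSol S p q r j).2 with hv
  have hmain : ∀ k, (u k).degree < (m:ℕ) ∧ (v k).degree < (n:ℕ) ∧
      u k * p 0 + v k * q 0 = r k - fbTail p q u v k := by
    intro k
    induction k using Nat.strong_induction_on with
    | _ k ih =>
      have hdeg : (r k - fbTail p q u v k).degree < ((n+m:ℕ) : WithBot ℕ) := by
        apply lt_of_le_of_lt (degree_sub_le _ _)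
        apply max_lt (hr k)
        exact fbTail_degree_lt n m p q u v hp hq k
          (fun j hj => (ih j hj).1) (fun j hj => (ih j hj).2.1)
      have he : fbSol S p q r k = S (r k - fbTail p q u v k) := by
        rw [fbSol_eq S p q r k, ← hu, ← hv]
      have h1 : u k = (S (r k - fbTail p q u v k)).1 := by rw [hu]; simp only; rw [he]
      have h2 : v k = (S (r k - fbTail p q u v k)).2 := by rw [hv]; simp only; rw [he]
      rw [h1, h2]
      exact hSspec _ hdeg
  refine ⟨(u, v), ⟨fun k => ⟨(hmain k).1, (hmain k).2.1⟩, fun k => ?_⟩, ?_⟩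
  · rw [fbBridge, (hmain k).2.2]; ring
  · rintro ⟨u', v'⟩ ⟨hdeg', heq'⟩
    have hall : ∀ k, u' k = u k ∧ v' k = v k := by
      intro k
      induction k using Nat.strong_induction_on with
      | _ k ih =>
        have htail : fbTail p q u' v' k = fbTail p q u v k := by
          apply Finset.sum_congr rfl
          intro i hi
          have hik : k - (i+1) < k := by have := mem_range.mp hi; omega
          rw [(ih _ hik).1, (ih _ hik).2]
        have hdeg : (r k - fbTail p q u v k).degree < ((n+m:ℕ) : WithBot ℕ) := by
          apply lt_of_le_of_lt (degree_sub_le _ _)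
          apply max_lt (hr k)
          exact fbTail_degree_lt n m p q u v hp hq k
            (fun j hj => (hmain j).1) (fun j hj => (hmain j).2.1)
        have heq'' : u' k * p 0 + v' k * q 0 = r k - fbTail p q u v k := by
          have := heq' k
          rw [fbBridge, htail] at this
          linear_combination this
        have := (hsyl _ hdeg).unique
          (show ((u' k, v' k) : Polynomial ℂ × Polynomial ℂ).1.degree < (m:ℕ) ∧ _ ∧ _
            from ⟨(hdeg' k).1, (hdeg' k).2, heq''⟩)
          ⟨(hmain k).1, (hmain k).2.1, (hmain k).2.2⟩
        exact ⟨congrArg Prod.fst this, congrArg Prod.snd this⟩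
    have h1 : u' = u := funext fun k => (hall k).1
    have h2 : v' = v := funext fun k => (hall k).2
    simp [h1, h2]
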